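/- Let X₁ be a set of rank one valuation rings in Zar(F) and X₂ a nonempty subset of Zar(F) such that J(X₂) = ⋂_{V∈X₂} 𝔪_V ≠ 0 and every patch limit point of X₁ lies in X₂. If A = A(X₁) ∩ A(X₂) is a local domain, then A = A(X₂). -/

import Mathlib

open Set

/-- A subring `V` of a field `F` is a valuation ring of `F` (with quotient field `F`). -/
def IsValSubring (F : Type*) [Field F] (V : Subring F) : Prop :=
  ∀ t : F, t ≠ 0 → t ∈ V ∨ t⁻¹ ∈ V

/-- The Zariski-Riemann space of the field `F`: the set of valuation rings of `F`. -/
def Zar (F : Type*) [Field F] : Type _ := {V : Subring F // IsValSubring F V}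

/-- The patch (constructible) topology on `Zar F`, generated by the sets
`{V : x ∈ V}` and `{V : y ∉ V}` for `x, y ∈ F`. -/
instance Zar.patchTopology (F : Type*) [Field F] : TopologicalSpace (Zar F) :=
  TopologicalSpace.generateFrom
    ({S | ∃ x : F, S = {V : Zar F | x ∈ V.1}} ∪ {S | ∃ y : F, S = {V : Zar F | y ∉ V.1}})

variable {F : Type*} [Field F]

/-- The maximal ideal of a valuation ring of `F`, as a subset of `F`. -/
def mIdeal (V : Zar F) : Set F := {x : F | x ∈ V.1 ∧ (x = 0 ∨ x⁻¹ ∉ V.1)}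

/-- `A(X)`: the intersection of the valuation rings in `X`, as a subset of `F`. -/
def aSet (X : Set (Zar F)) : Set F := ⋂ V ∈ X, ((V : Zar F).1 : Set F)

/-- `A(X)` as a subring of `F`. -/
def ASub (X : Set (Zar F)) : Subring F := ⨅ V ∈ X, (V : Zar F).1

/-- `J(X)`: the intersection of the maximal ideals of the valuation rings in `X`. -/
def jSet (X : Set (Zar F)) : Set F := ⋂ V ∈ X, mIdeal V

/-- The set of limit points of `X` in the patch topology of `Zar F`. -/
def limPts (X : Set (Zar F)) : Set (Zar F) :=
  {V : Zar F | ∀ U : Set (Zar F), IsOpen U → V ∈ U → ∃ W ∈ X, W ≠ V ∧ W ∈ U}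


/-- A valuation ring of `F` has rank one iff it is a maximal proper valuation subring of `F`. -/
def RankOne (V : Zar F) : Prop :=
  V.1 ≠ ⊤ ∧ ∀ W : Zar F, V.1 ≤ W.1 → W.1 ≠ ⊤ → W.1 = V.1

/-! ### Auxiliary lemmas -/

namespace Zar14

lemma inv_mem_m {V : Zar F} {x : F} (h : x ∉ V.1) : x⁻¹ ∈ mIdeal V := by
  have hx : x ≠ 0 := fun h0 => h (h0 ▸ V.1.zero_mem)
  rcases V.2 x hx with h' | h'
  · exact absurd h' h
  · exact ⟨h', Or.inr (by rwa [inv_inv])⟩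

lemma m_inv_not_mem {V : Zar F} {x : F} (h : x ∈ mIdeal V) (hx : x ≠ 0) : x⁻¹ ∉ V.1 :=
  h.2.resolve_left hx

lemma not_mem_of_inv_m {V : Zar F} {x : F} (h : x⁻¹ ∈ mIdeal V) (hx : x ≠ 0) : x ∉ V.1 := by
  have := m_inv_not_mem h (inv_ne_zero hx)
  rwa [inv_inv] at this

lemma one_not_m (V : Zar F) : (1 : F) ∉ mIdeal V := by
  intro h
  exact (h.2.resolve_left one_ne_zero) (by simpa using V.1.one_mem)

lemma neg_one_not_m (V : Zar F) : (-1 : F) ∉ mIdeal V := by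
  intro h
  have h2 := h.2.resolve_left (by norm_num : (-1 : F) ≠ 0)
  rw [show ((-1 : F))⁻¹ = -1 by norm_num] at h2
  exact h2 (V.1.neg_mem V.1.one_mem)

lemma m_neg {V : Zar F} {x : F} (h : x ∈ mIdeal V) : -x ∈ mIdeal V := by
  refine ⟨V.1.neg_mem h.1, ?_⟩
  rcases h.2 with h0 | hi
  · exact Or.inl (by simp [h0])
  · refine Or.inr fun hc => hi ?_
    rw [inv_neg] at hc
    simpa using V.1.neg_mem hc

lemma m_mul {V : Zar F} {x y : F} (hx : x ∈ mIdeal V) (hy : y ∈ V.1) : x * y ∈ mIdeal V := by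
  refine ⟨V.1.mul_mem hx.1 hy, ?_⟩
  by_cases h0 : x * y = 0
  · exact Or.inl h0
  refine Or.inr fun hinv => ?_
  have hx0 : x ≠ 0 := left_ne_zero_of_mul h0
  have hy0 : y ≠ 0 := right_ne_zero_of_mul h0
  have hxi : x⁻¹ = y * (x * y)⁻¹ := by field_simp
  exact m_inv_not_mem hx hx0 (hxi ▸ V.1.mul_mem hy hinv)

lemma m_mul' {V : Zar F} {x y : F} (hx : x ∈ V.1) (hy : y ∈ mIdeal V) : x * y ∈ mIdeal V := by
  rw [mul_comm]; exact m_mul hy hx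

lemma m_sub {V : Zar F} {x y : F} (hx : x ∈ mIdeal V) (hy : y ∈ mIdeal V) :
    x - y ∈ mIdeal V := by
  refine ⟨V.1.sub_mem hx.1 hy.1, ?_⟩
  by_cases h0 : x - y = 0
  · exact Or.inl h0
  refine Or.inr fun hinv => ?_
  by_cases hx0 : x = 0
  · subst hx0
    rw [zero_sub, inv_neg] at hinv
    exact m_inv_not_mem hy (fun h => h0 (by simp [h])) (by simpa using V.1.neg_mem hinv)
  by_cases hy0 : y = 0
  · subst hy0
    rw [sub_zero] at hinv h0
    exact m_inv_not_mem hx h0 hinv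
  rcases V.2 (x * y⁻¹) (by simp [hx0, hy0]) with h | h
  · have e : y⁻¹ = (x * y⁻¹ - 1) * (x - y)⁻¹ := by
      rw [show x * y⁻¹ - 1 = (x - y) * y⁻¹ by field_simp, mul_comm (x - y) y⁻¹, mul_assoc,
        mul_inv_cancel₀ h0, mul_one]
    exact m_inv_not_mem hy hy0 (e ▸ V.1.mul_mem (V.1.sub_mem h V.1.one_mem) hinv)
  · rw [mul_inv, inv_inv] at h
    have hyx : y - x ≠ 0 := fun hc => h0 (by rw [← neg_sub y x, hc, neg_zero])
    have e : x⁻¹ = (x⁻¹ * y - 1) * (y - x)⁻¹ := by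
      rw [show x⁻¹ * y - 1 = (y - x) * x⁻¹ by field_simp, mul_comm (y - x) x⁻¹, mul_assoc,
        mul_inv_cancel₀ hyx, mul_one]
    have hinv' : (y - x)⁻¹ ∈ V.1 := by
      rw [show (y - x)⁻¹ = -(x - y)⁻¹ by rw [← neg_sub x y, inv_neg]]
      exact V.1.neg_mem hinv
    exact m_inv_not_mem hx hx0 (e ▸ V.1.mul_mem (V.1.sub_mem h V.1.one_mem) hinv')

lemma m_add {V : Zar F} {x y : F} (hx : x ∈ mIdeal V) (hy : y ∈ mIdeal V) :
    x + y ∈ mIdeal V := by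
  have := m_sub hx (m_neg hy); rwa [sub_neg_eq_add] at this

lemma unit_of_one_add_m {V : Zar F} {s : F} (h : 1 + s ∈ mIdeal V) :
    s ∈ V.1 ∧ s⁻¹ ∈ V.1 := by
  have hs : s ∈ V.1 := by
    have : s = (1 + s) - 1 := by ring
    rw [this]; exact V.1.sub_mem h.1 V.1.one_mem
  refine ⟨hs, ?_⟩
  by_contra hsi
  have hsm : s ∈ mIdeal V := ⟨hs, Or.inr hsi⟩
  have : (1 : F) ∈ mIdeal V := by
    have e : (1 : F) = (1 + s) - s := by ring
    rw [e]; exact m_sub h hsm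
  exact one_not_m V this

lemma m_pow {V : Zar F} {x : F} (h : x ∈ mIdeal V) : ∀ n : ℕ, 1 ≤ n → x ^ n ∈ mIdeal V := by
  intro n hn
  induction n with
  | zero => omega
  | succ k ih =>
    rcases Nat.eq_or_lt_of_le hn with h1 | h1
    · simpa [← h1] using (by simpa using h : x ^ 1 ∈ mIdeal V)
    · rw [pow_succ]
      exact m_mul (ih (by omega)) h.1

lemma unit_of_pow_unit {V : Zar F} {a : F} {m : ℕ} (hm : 1 ≤ m)
    (h1 : a ^ m ∈ V.1) (h2 : (a ^ m)⁻¹ ∈ V.1) : a ∈ V.1 ∧ a⁻¹ ∈ V.1 := by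
  by_cases ha : a = 0
  · subst ha; exact ⟨V.1.zero_mem, by simpa using V.1.zero_mem⟩
  rcases V.2 a ha with h | h
  · refine ⟨h, ?_⟩
    by_contra hia
    have hma : a ^ m ∈ mIdeal V := m_pow ⟨h, Or.inr hia⟩ m hm
    exact m_inv_not_mem hma (pow_ne_zero _ ha) h2
  · refine ⟨?_, h⟩
    by_contra hia
    have him : a⁻¹ ∈ mIdeal V := inv_mem_m hia
    have hma : (a⁻¹) ^ m ∈ mIdeal V := m_pow him m hm
    rw [inv_pow] at hma
    exact m_inv_not_mem hma (by simp [ha]) (by rwa [inv_inv])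

end Zar14
namespace Zar14

lemma isOpen_inSet (x : F) : IsOpen {V : Zar F | x ∈ V.1} :=
  TopologicalSpace.isOpen_generateFrom_of_mem (Or.inl ⟨x, rfl⟩)

lemma isOpen_notInSet (x : F) : IsOpen {V : Zar F | x ∉ V.1} :=
  TopologicalSpace.isOpen_generateFrom_of_mem (Or.inr ⟨x, rfl⟩)

noncomputable def phi : Zar F → (F → Bool) := fun V x => @decide (x ∈ V.1) (Classical.propDecidable _)

lemma phi_iff {V : Zar F} {x : F} : phi V x = true ↔ x ∈ V.1 := by
  simp [phi]

lemma closed_coord (x : F) (b : Bool) : IsClosed {g : F → Bool | g x = b} := by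
  have e : {g : F → Bool | g x = b} = (fun g : F → Bool => g x) ⁻¹' {b} := rfl
  rw [e]
  exact (isClosed_discrete {b}).preimage (continuous_apply x)

lemma open_coord (x : F) (b : Bool) : IsOpen {g : F → Bool | g x = b} := by
  have e : {g : F → Bool | g x = b} = (fun g : F → Bool => g x) ⁻¹' {b} := rfl
  rw [e]
  exact (isOpen_discrete {b}).preimage (continuous_apply x)

lemma inducing_phi : Topology.IsInducing (phi : Zar F → F → Bool) := by
  constructor
  apply le_antisymm
  · apply continuous_iff_le_induced.mp
    apply continuous_pi
    intro x
    apply continuous_discrete_rng.mpr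
    intro b
    cases b
    · have : (fun V : Zar F => phi V x) ⁻¹' {false} = {V : Zar F | x ∉ V.1} := by
        ext V; simp [phi]
      rw [this]; exact isOpen_notInSet x
    · have : (fun V : Zar F => phi V x) ⁻¹' {true} = {V : Zar F | x ∈ V.1} := by
        ext V; simp [phi]
      rw [this]; exact isOpen_inSet x
  · refine le_generateFrom ?_
    rintro s (⟨x, rfl⟩ | ⟨x, rfl⟩)
    · have e : {V : Zar F | x ∈ V.1} = phi ⁻¹' {g : F → Bool | g x = true} := by
        ext V; simp [phi]
      rw [e]
      exact isOpen_induced (open_coord x true)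
    · have e : {V : Zar F | x ∉ V.1} = phi ⁻¹' {g : F → Bool | g x = false} := by
        ext V; simp [phi]
      rw [e]
      exact isOpen_induced (open_coord x false)

lemma closed_range_phi : IsClosed (range (phi : Zar F → F → Bool)) := by
  have hr : range (phi : Zar F → F → Bool) =
      ({g : F → Bool | g 1 = true} ∩ {g : F → Bool | g 0 = true} ∩
       (⋂ (x : F) (y : F), ({g : F → Bool | g x = true}ᶜ ∪ {g : F → Bool | g y = true}ᶜ ∪
          {g : F → Bool | g (x + y) = true})) ∩
       (⋂ (x : F) (y : F), ({g : F → Bool | g x = true}ᶜ ∪ {g : F → Bool | g y = true}ᶜ ∪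
          {g : F → Bool | g (x * y) = true})) ∩
       (⋂ (x : F), ({g : F → Bool | g x = true}ᶜ ∪ {g : F → Bool | g (-x) = true})) ∩
       (⋂ x ∈ {x : F | x ≠ 0}, ({g : F → Bool | g x = true} ∪ {g : F → Bool | g x⁻¹ = true}))) := by
    ext g
    constructor
    · rintro ⟨V, rfl⟩
      refine ⟨⟨⟨⟨⟨?_, ?_⟩, ?_⟩, ?_⟩, ?_⟩, ?_⟩
      · exact phi_iff.mpr V.1.one_mem
      · exact phi_iff.mpr V.1.zero_mem
      · refine mem_iInter.mpr fun x => mem_iInter.mpr fun y => ?_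
        by_cases hx : x ∈ V.1
        · by_cases hy : y ∈ V.1
          · exact Or.inr (phi_iff.mpr (V.1.add_mem hx hy))
          · exact Or.inl (Or.inr (by simp [phi_iff, hy]))
        · exact Or.inl (Or.inl (by simp [phi_iff, hx]))
      · refine mem_iInter.mpr fun x => mem_iInter.mpr fun y => ?_
        by_cases hx : x ∈ V.1
        · by_cases hy : y ∈ V.1
          · exact Or.inr (phi_iff.mpr (V.1.mul_mem hx hy))
          · exact Or.inl (Or.inr (by simp [phi_iff, hy]))
        · exact Or.inl (Or.inl (by simp [phi_iff, hx]))
      · refine mem_iInter.mpr fun x => ?_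
        by_cases hx : x ∈ V.1
        · exact Or.inr (phi_iff.mpr (V.1.neg_mem hx))
        · exact Or.inl (by simp [phi_iff, hx])
      · refine mem_iInter₂.mpr fun x hx => ?_
        rcases V.2 x hx with h | h
        · exact Or.inl (phi_iff.mpr h)
        · exact Or.inr (phi_iff.mpr h)
    · rintro ⟨⟨⟨⟨⟨h1, h0⟩, hadd⟩, hmul⟩, hneg⟩, hval⟩
      have hadd' : ∀ x y : F, g x = true → g y = true → g (x + y) = true := by
        intro x y hx hy
        rcases mem_iInter.mp (mem_iInter.mp hadd x) y with (h | h) | h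
        · exact absurd hx h
        · exact absurd hy h
        · exact h
      have hmul' : ∀ x y : F, g x = true → g y = true → g (x * y) = true := by
        intro x y hx hy
        rcases mem_iInter.mp (mem_iInter.mp hmul x) y with (h | h) | h
        · exact absurd hx h
        · exact absurd hy h
        · exact h
      have hneg' : ∀ x : F, g x = true → g (-x) = true := by
        intro x hx
        rcases mem_iInter.mp hneg x with h | h
        · exact absurd hx h
        · exact h
      set Vs : Subring F :=
        { carrier := {x : F | g x = true}
          one_mem' := h1
          zero_mem' := h0
          add_mem' := fun ha hb => hadd' _ _ ha hb
          mul_mem' := fun ha hb => hmul' _ _ ha hb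
          neg_mem' := fun ha => hneg' _ ha } with hVs
      have hmemVs : ∀ x : F, x ∈ Vs ↔ g x = true := fun x => Iff.rfl
      refine ⟨⟨Vs, ?_⟩, ?_⟩
      · intro t ht
        exact (mem_iInter₂.mp hval t ht).imp (hmemVs t).mpr (hmemVs t⁻¹).mpr
      · funext x
        show phi (⟨Vs, _⟩ : Zar F) x = g x
        by_cases hx : g x = true
        · rw [hx]
          exact phi_iff.mpr ((hmemVs x).mpr hx)
        · rw [Bool.not_eq_true] at hx
          rw [hx]
          exact Bool.eq_false_iff.mpr fun h => by
            have := (hmemVs x).mp (phi_iff.mp h)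
            rw [hx] at this
            exact Bool.false_ne_true this
  rw [hr]
  refine IsClosed.inter (IsClosed.inter (IsClosed.inter (IsClosed.inter (IsClosed.inter
    (closed_coord 1 true) (closed_coord 0 true)) ?_) ?_) ?_) ?_
  · exact isClosed_iInter fun x => isClosed_iInter fun y =>
      (((open_coord x true).isClosed_compl).union ((open_coord y true).isClosed_compl)).union
        (closed_coord (x + y) true)
  · exact isClosed_iInter fun x => isClosed_iInter fun y =>
      (((open_coord x true).isClosed_compl).union ((open_coord y true).isClosed_compl)).union
        (closed_coord (x * y) true)
  · exact isClosed_iInter fun x =>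
      ((open_coord x true).isClosed_compl).union (closed_coord (-x) true)
  · exact isClosed_biInter fun x _ => (closed_coord x true).union (closed_coord x⁻¹ true)

lemma compactSpace_zar : CompactSpace (Zar F) := by
  constructor
  have h := inducing_phi.isCompact_preimage (closed_range_phi (F := F)) isCompact_univ
  simpa using h

end Zar14
namespace Zar14

lemma finite_inter {X₁ X₂ : Set (Zar F)} (hlim : limPts X₁ ⊆ X₂) {K : Set (Zar F)}
    (hKo : IsOpen K) (hKc : IsClosed K) (hd : ∀ W ∈ X₂, W ∉ K) : (X₁ ∩ K).Finite := by
  haveI := compactSpace_zar (F := F)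
  have hcl : IsClosed (X₁ ∩ K) := by
    rw [← closure_subset_iff_isClosed]
    intro z hz
    have hzK : z ∈ K := closure_minimal inter_subset_right hKc hz
    by_cases hzX : z ∈ X₁ ∩ K
    · exact hzX
    · exfalso
      have hzlim : z ∈ limPts X₁ := by
        intro U hU hzU
        have hne : (U ∩ (X₁ ∩ K)).Nonempty := by
          rw [mem_closure_iff] at hz
          exact hz U hU hzU
        obtain ⟨W, hWU, hWX, hWK⟩ := hne
        exact ⟨W, hWX, fun hWz => hzX (hWz ▸ ⟨hWX, hWK⟩), hWU⟩
      exact hd z (hlim hzlim) hzK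
  have hcp : IsCompact (X₁ ∩ K) := hcl.isCompact
  have hiso : ∀ t ∈ X₁ ∩ K, ∃ U : Set (Zar F), IsOpen U ∧ t ∈ U ∧
      ∀ W ∈ X₁, W ∈ U → W = t := by
    intro t ht
    have htn : t ∉ limPts X₁ := fun hc => hd t (hlim hc) ht.2
    simp only [limPts, mem_setOf_eq] at htn
    push_neg at htn
    obtain ⟨U, hUo, htU, hU⟩ := htn
    refine ⟨U, hUo, htU, fun W hW hWU => ?_⟩
    by_contra hne
    exact (hU W hW hne) hWU
  choose U hUo htU hUiso using fun t : ↥(X₁ ∩ K) => hiso t t.2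
  obtain ⟨s, hs⟩ := hcp.elim_finite_subcover U hUo
    (fun z hz => mem_iUnion.mpr ⟨⟨z, hz⟩, htU _⟩)
  apply Set.Finite.subset (s.finite_toSet.image Subtype.val)
  intro z hz
  have := hs hz
  simp only [mem_iUnion] at this
  obtain ⟨i, his, hzU⟩ := this
  exact ⟨i, his, (hUiso i z hz.1 hzU).symm⟩

lemma cic {V : Zar F} (hV : RankOne V) {a j : F} (ha : a ∉ V.1) (hj : j ≠ 0) :
    ∃ n : ℕ, j * a ^ n ∉ V.1 := by
  by_contra hc
  push_neg at hc
  set B : Subring F := (Algebra.adjoin ↥V.1 {a}).toSubring with hB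
  have hVB : V.1 ≤ B := by
    intro x hx
    have : (algebraMap ↥V.1 F) ⟨x, hx⟩ ∈ Algebra.adjoin ↥V.1 {a} :=
      Subalgebra.algebraMap_mem _ _
    exact this
  have haB : a ∈ B := by
    have : a ∈ Algebra.adjoin ↥V.1 {a} := Algebra.subset_adjoin rfl
    exact this
  have hval : IsValSubring F B := fun t ht => (V.2 t ht).imp (fun h => hVB h) (fun h => hVB h)
  have hmul : ∀ b ∈ B, j * b ∈ V.1 := by
    intro b hb
    have hb' : b ∈ Algebra.adjoin ↥V.1 {a} := hb
    rw [Algebra.adjoin_singleton_eq_range_aeval] at hb'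
    obtain ⟨p, hp⟩ := hb'
    rw [← hp]
    simp only [AlgHom.toRingHom_eq_coe, RingHom.coe_coe]
    clear hp hb
    induction p using Polynomial.induction_on' with
    | add p q hp hq =>
      rw [map_add, mul_add]
      exact V.1.add_mem hp hq
    | monomial n r =>
      rw [Polynomial.aeval_monomial]
      have e : j * ((algebraMap ↥V.1 F) r * a ^ n) = r.1 * (j * a ^ n) := by
        show j * (r.1 * a ^ n) = r.1 * (j * a ^ n)
        ring
      rw [e]
      exact V.1.mul_mem r.2 (hc n)
  have hBne : B ≠ ⊤ := by
    intro htop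
    apply hV.1
    rw [Subring.eq_top_iff']
    intro x
    have hx : j⁻¹ * x ∈ B := htop ▸ Subring.mem_top _
    have := hmul _ hx
    rwa [← mul_assoc, mul_inv_cancel₀ hj, one_mul] at this
  have heq := hV.2 ⟨B, hval⟩ hVB hBne
  exact ha (heq ▸ haB)

lemma cic' {V : Zar F} (hV : RankOne V) {a j : F} (ha : a ∉ V.1) (hj : j ≠ 0) :
    ∃ n₀ : ℕ, ∀ n, n₀ ≤ n → j * a ^ n ∉ V.1 := by
  obtain ⟨n₀, h0⟩ := cic hV ha hj
  have ha0 : a ≠ 0 := fun h => ha (h ▸ V.1.zero_mem)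
  have hainv : a⁻¹ ∈ V.1 := (V.2 a ha0).resolve_left ha
  refine ⟨n₀, fun n hn => ?_⟩
  induction n, hn using Nat.le_induction with
  | base => exact h0
  | succ n hn ih =>
    intro hmem
    apply ih
    have e : j * a ^ (n + 1) * a⁻¹ = j * a ^ n := by
      rw [pow_succ, ← mul_assoc, mul_assoc (j * a ^ n) a a⁻¹, mul_inv_cancel₀ ha0, mul_one]
    rw [← e]
    exact V.1.mul_mem hmem hainv

end Zar14
namespace Zar14

lemma inv_one_add_mem {V : Zar F} {s : F} (hs : s ∈ mIdeal V) : (1 + s)⁻¹ ∈ V.1 := by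
  by_contra h
  have h1sm : 1 + s ∈ mIdeal V := ⟨V.1.add_mem V.1.one_mem hs.1, Or.inr h⟩
  have h1 : (1 : F) ∈ mIdeal V := by
    have e : (1 : F) = (1 + s) - s := by ring
    rw [e]; exact m_sub h1sm hs
  exact one_not_m V h1

lemma mem_ASub {X : Set (Zar F)} {x : F} : x ∈ ASub X ↔ ∀ V ∈ X, x ∈ V.1 := by
  simp [ASub, Subring.mem_iInf]

end Zar14

theorem stmt14 (X₁ X₂ : Set (Zar F)) (h1 : ∀ V ∈ X₁, RankOne V)
    (h2 : X₂.Nonempty) (hJ : jSet X₂ ≠ {0}) (hlim : limPts X₁ ⊆ X₂)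
    (hloc : IsLocalRing ↥(ASub X₁ ⊓ ASub X₂)) :
    aSet X₁ ∩ aSet X₂ = aSet X₂ := by
  classical
  have main : aSet X₂ ⊆ aSet X₁ := by
    intro a haX₂
    have ha2 : ∀ V ∈ X₂, a ∈ V.1 := by
      intro V hV
      have := mem_iInter₂.mp haX₂ V hV
      simpa using this
    rw [aSet, mem_iInter₂]
    intro W₁ hW₁
    simp only [SetLike.mem_coe]
    by_contra ha
    have ha0 : a ≠ 0 := fun h => ha (h ▸ W₁.1.zero_mem)
    -- find a nonzero element of J(X₂)
    have h0J : (0 : F) ∈ jSet X₂ := mem_iInter₂.mpr fun V _ => ⟨V.1.zero_mem, Or.inl rfl⟩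
    have hJ' : ∃ j ∈ jSet X₂, j ≠ 0 := by
      by_contra hcon
      push_neg at hcon
      apply hJ
      apply Subset.antisymm
      · intro x hx
        exact hcon x hx
      · intro x hx
        rw [mem_singleton_iff] at hx
        exact hx ▸ h0J
    obtain ⟨j, hjJ, hj0⟩ := hJ'
    have hjm : ∀ V ∈ X₂, j ∈ mIdeal V := fun V hV => mem_iInter₂.mp hjJ V hV
    -- finite exceptional sets
    set G : Set (Zar F) := X₁ ∩ {W : Zar F | a ∉ W.1} with hGdef
    set H : Set (Zar F) := X₁ ∩ {W : Zar F | ¬(j ∈ W.1 ∧ j⁻¹ ∉ W.1)} with hHdef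
    have hGfin : G.Finite := by
      apply Zar14.finite_inter hlim (Zar14.isOpen_notInSet a)
      · have e : {W : Zar F | a ∉ W.1} = {W : Zar F | a ∈ W.1}ᶜ := rfl
        rw [e]; exact (Zar14.isOpen_inSet a).isClosed_compl
      · intro W hW hc
        exact hc (ha2 W hW)
    have hHfin : H.Finite := by
      apply Zar14.finite_inter hlim
      · have e : {W : Zar F | ¬(j ∈ W.1 ∧ j⁻¹ ∉ W.1)} =
            {W : Zar F | j ∉ W.1} ∪ {W : Zar F | j⁻¹ ∈ W.1} := by
          ext W
          simp only [mem_setOf_eq, mem_union, not_and_or, not_not]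
        rw [e]
        exact (Zar14.isOpen_notInSet j).union (Zar14.isOpen_inSet j⁻¹)
      · have e : {W : Zar F | ¬(j ∈ W.1 ∧ j⁻¹ ∉ W.1)} =
            ({W : Zar F | j ∈ W.1} ∩ {W : Zar F | j⁻¹ ∉ W.1})ᶜ := by
          ext W
          simp only [mem_setOf_eq, mem_compl_iff, mem_inter_iff, not_and_or, not_not]
        rw [e]
        exact ((Zar14.isOpen_inSet j).inter (Zar14.isOpen_notInSet j⁻¹)).isClosed_compl
      · intro W hW hc
        apply hc
        have := hjm W hW
        exact ⟨this.1, this.2.resolve_left hj0⟩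
    set E : Set (Zar F) := G ∪ H with hEdef
    have hEfin : E.Finite := hGfin.union hHfin
    have hW₁E : W₁ ∈ E := Or.inl ⟨hW₁, ha⟩
    have hout : ∀ W ∈ X₁, W ∉ E → a ∈ W.1 ∧ j ∈ mIdeal W := by
      intro W hWX hWE
      constructor
      · by_contra h
        exact hWE (Or.inl ⟨hWX, h⟩)
      · by_contra h
        exact hWE (Or.inr ⟨hWX, fun hc => h ⟨hc.1, Or.inr hc.2⟩⟩)
    -- the iteration j_{k+1} = j_k (1 + j_k)
    set jseq : ℕ → F := fun k => Nat.rec j (fun _ x => x * (1 + x)) k with hjseqdef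
    have hjseqS : ∀ k, jseq (k + 1) = jseq k * (1 + jseq k) := fun k => rfl
    have hjm' : ∀ V : Zar F, j ∈ mIdeal V → ∀ k, jseq k ∈ mIdeal V := by
      intro V hV k
      induction k with
      | zero => exact hV
      | succ k ih =>
        rw [hjseqS]
        exact Zar14.m_mul ih (V.1.add_mem V.1.one_mem ih.1)
    obtain ⟨V₂, hV₂⟩ := h2
    have hjk0 : ∀ k, jseq k ≠ 0 := by
      intro k
      induction k with
      | zero => exact hj0
      | succ k ih =>
        rw [hjseqS]
        intro hc
        rcases mul_eq_zero.mp hc with h | h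
        · exact ih h
        · have : jseq k = -1 := eq_neg_of_add_eq_zero_right h
          exact Zar14.neg_one_not_m V₂ (this ▸ hjm' V₂ (hjm V₂ hV₂) k)
    have hbadk : ∀ W : Zar F, ∀ k, 1 + jseq k ∈ mIdeal W → ∀ k', k < k' → jseq k' ∈ mIdeal W := by
      intro W k hk k' hkk'
      have hstep : ∀ m, k + 1 ≤ m → jseq m ∈ mIdeal W := by
        intro m hm
        induction m, hm using Nat.le_induction with
        | base =>
          rw [hjseqS]
          exact Zar14.m_mul' (Zar14.unit_of_one_add_m hk).1 hk
        | succ m hm ih =>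
          rw [hjseqS]
          exact Zar14.m_mul ih (W.1.add_mem W.1.one_mem ih.1)
      exact hstep k' hkk'
    have hbadk2 : ∀ W : Zar F, {k : ℕ | 1 + jseq k ∈ mIdeal W}.Subsingleton := by
      intro W k hk k' hk'
      by_contra hne
      have key : ∀ m m' : ℕ, m < m' → 1 + jseq m ∈ mIdeal W → 1 + jseq m' ∈ mIdeal W → False := by
        intro m m' hlt hm hm'
        have hmem := hbadk W m hm m' hlt
        have h1 : (1 : F) ∈ mIdeal W := by
          have e : (1 : F) = (1 + jseq m') - jseq m' := by ring
          rw [e]; exact Zar14.m_sub hm' hmem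
        exact Zar14.one_not_m W h1
      rcases lt_trichotomy k k' with h | h | h
      · exact key k k' h hk hk'
      · exact hne h
      · exact key k' k h hk' hk
    have hbigfin : (⋃ W ∈ E, {k : ℕ | 1 + jseq k ∈ mIdeal W}).Finite :=
      Set.Finite.biUnion hEfin fun W _ => (hbadk2 W).finite
    obtain ⟨k, hk⟩ := hbigfin.infinite_compl.nonempty
    simp only [mem_compl_iff, mem_iUnion, not_exists] at hk
    set c : F := jseq k with hcdef
    have hcne : c ≠ 0 := hjk0 k
    have hcX₂ : ∀ V ∈ X₂, c ∈ mIdeal V := fun V hV => hjm' V (hjm V hV) k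
    have hcE : ∀ W ∈ E, 1 + c ∉ mIdeal W := fun W hW hbad => hk W hW hbad
    have hcout : ∀ W ∈ X₁, W ∉ E → c ∈ mIdeal W := fun W hx he => hjm' W (hout W hx he).2 k
    -- the set of "periodic" rings
    set P : Set (Zar F) :=
      {W ∈ E | a ∈ W.1 ∧ a⁻¹ ∈ W.1 ∧ ∃ m : ℕ, 1 ≤ m ∧ a ^ m - 1 ∈ mIdeal W} with hPdef
    have hPfin : P.Finite := hEfin.subset (sep_subset _ _)
    have hch : ∀ W : ↥P, ∃ m : ℕ, 1 ≤ m ∧ a ^ m - 1 ∈ mIdeal (W : Zar F) := fun W => W.2.2.2.2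
    choose mfun hm1 hmm using hch
    set D : ℕ := ∏ W ∈ hPfin.toFinset.attach, mfun ⟨W.1, hPfin.mem_toFinset.mp W.2⟩ with hDdef
    have hD1 : 1 ≤ D := Finset.one_le_prod' fun i _ => hm1 _
    have hdvd : ∀ (W : ↥P), mfun W ∣ D := by
      intro W
      have hWt : (W : Zar F) ∈ hPfin.toFinset := hPfin.mem_toFinset.mpr W.2
      have := Finset.dvd_prod_of_mem
        (fun i : ↥hPfin.toFinset => mfun ⟨i.1, hPfin.mem_toFinset.mp i.2⟩)
        (Finset.mem_attach _ (⟨(W : Zar F), hWt⟩ : ↥hPfin.toFinset))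
      simpa using this
    have hperiod : ∀ W : Zar F, a ∈ W.1 → ∀ m t : ℕ, a ^ m - 1 ∈ mIdeal W →
        a ^ (m * t) - 1 ∈ mIdeal W := by
      intro W haW m t hm
      induction t with
      | zero =>
        have e : a ^ (m * 0) - 1 = 0 := by simp
        rw [e]; exact ⟨W.1.zero_mem, Or.inl rfl⟩
      | succ t ih =>
        have e : a ^ (m * (t + 1)) - 1 = a ^ m * (a ^ (m * t) - 1) + (a ^ m - 1) := by
          rw [mul_add, mul_one, pow_add]; ring
        rw [e]
        exact Zar14.m_add (Zar14.m_mul' (pow_mem haW m) ih) hm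
    -- bad exponents for non-periodic rings are unique
    have hbadN : ∀ W ∈ E, W ∉ P → {n : ℕ | 1 + c * a ^ n ∈ mIdeal W}.Subsingleton := by
      intro W hWE hWP
      have key : ∀ n n' : ℕ, n < n' → 1 + c * a ^ n ∈ mIdeal W → 1 + c * a ^ n' ∈ mIdeal W →
          False := by
        intro n n' hlt hn hn'
        obtain ⟨d, rfl⟩ := Nat.exists_eq_add_of_lt hlt
        have hu1 := Zar14.unit_of_one_add_m hn
        have hu2 := Zar14.unit_of_one_add_m hn'
        have hcan0 : c * a ^ n ≠ 0 := mul_ne_zero hcne (pow_ne_zero _ ha0)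
        have hcam0 : c * a ^ (n + d + 1) ≠ 0 := mul_ne_zero hcne (pow_ne_zero _ ha0)
        have e1 : a ^ (d + 1) = (c * a ^ (n + d + 1)) * (c * a ^ n)⁻¹ := by
          field_simp
          ring
        have hm_am : a ^ (d + 1) ∈ W.1 := by rw [e1]; exact W.1.mul_mem hu2.1 hu1.2
        have e2 : (a ^ (d + 1))⁻¹ = (c * a ^ (n + d + 1))⁻¹ * (c * a ^ n) := by
          rw [e1, mul_inv, inv_inv]
        have hm_inv : (a ^ (d + 1))⁻¹ ∈ W.1 := by rw [e2]; exact W.1.mul_mem hu2.2 hu1.1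
        have hunit := Zar14.unit_of_pow_unit (by omega : 1 ≤ d + 1) hm_am hm_inv
        have hdiff : a ^ (d + 1) - 1 ∈ mIdeal W := by
          have e3 : a ^ (d + 1) - 1 =
              ((1 + c * a ^ (n + d + 1)) - (1 + c * a ^ n)) * (c * a ^ n)⁻¹ := by
            field_simp
            ring
          rw [e3]
          exact Zar14.m_mul (Zar14.m_sub hn' hn) hu1.2
        exact hWP ⟨hWE, hunit.1, hunit.2, d + 1, by omega, hdiff⟩
      intro n hn n' hn'
      by_contra hne
      rcases lt_trichotomy n n' with h | h | h
      · exact key n n' h hn hn'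
      · exact hne h
      · exact key n' n h hn' hn
    -- periodic rings are never bad at exponents divisible by D
    have hPgood : ∀ W, ∀ hW : W ∈ P, ∀ N : ℕ, 1 + c * a ^ (N * D) ∉ mIdeal W := by
      intro W hWP N hbad
      have haW : a ∈ W.1 := hWP.2.1
      have haiW : a⁻¹ ∈ W.1 := hWP.2.2.1
      obtain ⟨t, ht⟩ := hdvd ⟨W, hWP⟩
      have hND : a ^ (N * D) - 1 ∈ mIdeal W := by
        have e : N * D = mfun ⟨W, hWP⟩ * (t * N) := by rw [ht]; ring
        rw [e]
        exact hperiod W haW _ _ (hmm ⟨W, hWP⟩)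
      have hcaW : c * a ^ (N * D) ∈ W.1 := (Zar14.unit_of_one_add_m hbad).1
      have hcW : c ∈ W.1 := by
        have e : c = (c * a ^ (N * D)) * (a⁻¹) ^ (N * D) := by
          rw [inv_pow]; field_simp
        rw [e]; exact W.1.mul_mem hcaW (pow_mem haiW _)
      have h1c : 1 + c ∈ mIdeal W := by
        have e : (1 : F) + c = (1 + c * a ^ (N * D)) - c * (a ^ (N * D) - 1) := by ring
        rw [e]
        exact Zar14.m_sub hbad (Zar14.m_mul' hcW hND)
      exact hcE W hWP.1 h1c
    -- choose the exponent
    obtain ⟨n₀, hn₀⟩ := Zar14.cic' (h1 W₁ hW₁) ha hcne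
    have hBadfin : (⋃ W ∈ {W ∈ E | W ∉ P}, {n : ℕ | 1 + c * a ^ n ∈ mIdeal W}).Finite :=
      Set.Finite.biUnion (hEfin.subset (sep_subset _ _))
        fun W hW => (hbadN W hW.1 hW.2).finite
    obtain ⟨Bnd, hBnd⟩ := hBadfin.bddAbove
    set N : ℕ := Bnd + n₀ + 1 with hNdef
    have hNle : N ≤ N * D := Nat.le_mul_of_pos_right N (by omega)
    set s : F := c * a ^ (N * D) with hsdef
    have hs0 : s ≠ 0 := mul_ne_zero hcne (pow_ne_zero _ ha0)
    have hsW₁ : s ∉ W₁.1 := hn₀ (N * D) (by omega)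
    have hsX₂ : ∀ V ∈ X₂, s ∈ mIdeal V := fun V hV =>
      Zar14.m_mul (hcX₂ V hV) (pow_mem (ha2 V hV) _)
    have hsX₁out : ∀ W ∈ X₁, W ∉ E → s ∈ mIdeal W := fun W hx he =>
      Zar14.m_mul (hcout W hx he) (pow_mem (hout W hx he).1 _)
    have hsE : ∀ W ∈ E, 1 + s ∉ mIdeal W := by
      intro W hWE hbad
      by_cases hWP : W ∈ P
      · exact hPgood W hWP N hbad
      · have hmem : N * D ∈ ⋃ W ∈ {W ∈ E | W ∉ P}, {n : ℕ | 1 + c * a ^ n ∈ mIdeal W} :=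
          mem_biUnion ⟨hWE, hWP⟩ hbad
        have := hBnd hmem
        omega
    have h1s0 : (1 : F) + s ≠ 0 := by
      intro hcontra
      apply hsW₁
      have e : s = (1 + s) - 1 := by ring
      rw [e, hcontra]
      simpa using W₁.1.neg_mem W₁.1.one_mem
    set u : F := (1 + s)⁻¹ with hudef
    have huX₁ : ∀ W ∈ X₁, u ∈ W.1 := by
      intro W hWX
      by_cases hWE : W ∈ E
      · by_contra huW
        have h1sW : 1 + s ∈ W.1 := by
          rcases W.2 (1 + s) h1s0 with h | h
          · exact h
          · exact absurd h huW
        exact hsE W hWE ⟨h1sW, Or.inr huW⟩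
      · exact Zar14.inv_one_add_mem (hsX₁out W hWX hWE)
    have huX₂ : ∀ V ∈ X₂, u ∈ V.1 := fun V hV => Zar14.inv_one_add_mem (hsX₂ V hV)
    have h1sW₁ : (1 : F) + s ∉ W₁.1 := by
      intro hcontra
      apply hsW₁
      have e : s = (1 + s) - 1 := by ring
      rw [e]
      exact W₁.1.sub_mem hcontra W₁.1.one_mem
    have h1mu : (1 : F) - u = s * u := by
      rw [hudef]
      field_simp
      ring
    -- the local ring contradiction
    have huA : u ∈ ASub X₁ ⊓ ASub X₂ :=
      Subring.mem_inf.mpr ⟨Zar14.mem_ASub.mpr huX₁, Zar14.mem_ASub.mpr huX₂⟩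
    rcases IsLocalRing.isUnit_or_isUnit_one_sub_self
        (⟨u, huA⟩ : ↥(ASub X₁ ⊓ ASub X₂)) with hun | hun
    · obtain ⟨v, hv⟩ := hun.exists_right_inv
      have hv' : u * (v : F) = 1 := by simpa using congrArg Subtype.val hv
      have hvval : (v : F) = 1 + s := by
        have := eq_inv_of_mul_eq_one_right hv'
        rwa [hudef, inv_inv] at this
      have hvW₁ : (v : F) ∈ W₁.1 :=
        Zar14.mem_ASub.mp (Subring.mem_inf.mp v.2).1 W₁ hW₁
      rw [hvval] at hvW₁
      exact h1sW₁ hvW₁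
    · obtain ⟨v, hv⟩ := hun.exists_right_inv
      have hv' : ((1 : F) - u) * (v : F) = 1 := by simpa using congrArg Subtype.val hv
      have hvval : (v : F) = ((1 : F) - u)⁻¹ := eq_inv_of_mul_eq_one_right hv'
      have hu0 : u ≠ 0 := by
        rw [hudef]; exact inv_ne_zero h1s0
      have e2 : ((1 : F) - u)⁻¹ = 1 + s⁻¹ := by
        rw [h1mu, hudef, mul_inv, inv_inv]
        field_simp
        ring
      have hvV₂ : (v : F) ∈ V₂.1 :=
        Zar14.mem_ASub.mp (Subring.mem_inf.mp v.2).2 V₂ hV₂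
      rw [hvval, e2] at hvV₂
      have hsinv : s⁻¹ ∉ V₂.1 := Zar14.m_inv_not_mem (hsX₂ V₂ hV₂) hs0
      apply hsinv
      have e3 : s⁻¹ = (1 + s⁻¹) - 1 := by ring
      rw [e3]
      exact V₂.1.sub_mem hvV₂ V₂.1.one_mem
  apply Subset.antisymm
  · exact inter_subset_right
  · intro x hx
    exact ⟨main hx, hx⟩
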